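/- Let U ⊆ ℂ be open, S : ℝ → ℂ → ℂ, and T : ℂ → ℂ. Assume: (a) S(t+u, z) = S(t, T(S(u, z))) for all t, u ∈ ℝ and z ∈ U; (b) T(S(0, z)) = z for all z ∈ U; (c) for each t, the map z ↦ S(t, z) is holomorphic on an open set containing all relevant points, T is holomorphic near S(0, z) for z ∈ U, and for each z the map t ↦ S(t, z) is differentiable. Then for all t ∈ ℝ and z ∈ U, the partial derivatives satisfy ∂ₜS(t, z)·∂_zS(0, z) = ∂ₜS(0, z)·∂_zS(t, z). -/

import Mathlib

/-- The first-order linear PDE of continuous Schwarzian reflection: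
differentiating S(t+u, z) = S(t, T(S(u, z))) in u at u = 0, using T ∘ S₀ = id, yields
∂ₜS(t,z)·∂_zS(0,z) = ∂ₜS(0,z)·∂_zS(t,z). -/
theorem stmt5 (U : Set ℂ) (hU : IsOpen U) (S : ℝ → ℂ → ℂ) (T : ℂ → ℂ)
    (hgroup : ∀ t u : ℝ, ∀ z ∈ U, S (t + u) z = S t (T (S u z)))
    (hTinv : ∀ z ∈ U, T (S 0 z) = z)
    (hShol : ∀ t : ℝ, ∀ z ∈ U, AnalyticAt ℂ (S t) z)
    (hThol : ∀ z ∈ U, AnalyticAt ℂ T (S 0 z))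
    (hSt : ∀ z ∈ U, ∀ t : ℝ, DifferentiableAt ℝ (fun u => S u z) t) :
    ∀ t : ℝ, ∀ z ∈ U,
      deriv (fun u => S u z) t * deriv (S 0) z =
        deriv (fun u => S u z) 0 * deriv (S t) z := by
  intro t z hz
  -- derivatives as HasDerivAt
  have hS0 : HasDerivAt (S 0) (deriv (S 0) z) z := (hShol 0 z hz).differentiableAt.hasDerivAt
  have hStz : HasDerivAt (S t) (deriv (S t) z) z := (hShol t z hz).differentiableAt.hasDerivAt
  have hT : HasDerivAt T (deriv T (S 0 z)) (S 0 z) := (hThol z hz).differentiableAt.hasDerivAt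
  have hc0 : HasDerivAt (fun u : ℝ => S u z) (deriv (fun u => S u z) 0) 0 :=
    (hSt z hz 0).hasDerivAt
  -- Step 4 : chain rule on T ∘ S 0 = id near z
  have hid : deriv T (S 0 z) * deriv (S 0) z = 1 := by
    have hcomp : HasDerivAt (fun w => T (S 0 w)) (deriv T (S 0 z) * deriv (S 0) z) z :=
      hT.comp z hS0
    have heq : (fun w => T (S 0 w)) =ᶠ[nhds z] id := by
      filter_upwards [hU.mem_nhds hz] with w hw using hTinv w hw
    have : HasDerivAt (id : ℂ → ℂ) (deriv T (S 0 z) * deriv (S 0) z) z :=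
      hcomp.congr_of_eventuallyEq heq.symm
    have := this.deriv
    rw [deriv_id] at this; exact this.symm
  -- Step 1 : deriv of u ↦ S (t+u) z at 0 is deriv (fun u => S u z) t
  have hL : HasDerivAt (fun u : ℝ => S (t + u) z) (deriv (fun u => S u z) t) 0 := by
    have h1 : HasDerivAt (fun u : ℝ => t + u) 1 0 := by
      simpa using (hasDerivAt_id (0 : ℝ)).const_add t
    have h2 : HasDerivAt (fun u : ℝ => S u z) (deriv (fun u => S u z) t) (t + 0) := by
      simpa using (hSt z hz t).hasDerivAt
    have h3 := h2.scomp 0 h1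
    rw [one_smul] at h3
    exact h3
  -- Step 2 : deriv of u ↦ S t (T (S u z)) at 0
  have hc : HasDerivAt (fun u : ℝ => T (S u z)) (deriv T (S 0 z) * deriv (fun u => S u z) 0) 0 :=
    hT.comp 0 hc0
  have hc' : HasDerivAt (fun u : ℝ => S t (T (S u z)))
      (deriv (S t) z * (deriv T (S 0 z) * deriv (fun u => S u z) 0)) 0 := by
    have : HasDerivAt (S t) (deriv (S t) z) (T (S 0 z)) := by rw [hTinv z hz]; exact hStz
    exact this.comp 0 hc
  -- Step 3: the two functions agree
  have heq : (fun u : ℝ => S (t + u) z) = fun u : ℝ => S t (T (S u z)) := by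
    funext u; exact hgroup t u z hz
  have key : deriv (fun u => S u z) t
      = deriv (S t) z * (deriv T (S 0 z) * deriv (fun u => S u z) 0) := by
    have := hL
    rw [heq] at this
    exact this.unique hc'
  rw [key]; ring_nf
  linear_combination deriv (S t) z * deriv (fun u => S u z) 0 * hid
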